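/- Let c, ρ, h ∈ (0,∞), let δ ∈ ℝ, let N ∈ ℕ with N ≥ 1, and set T = N·h. Then the series Σ_{n=1}^{∞} n^{2ρδ} · e^{-c·n^{ρ}·h} converges and ( c^{2δ} · (1 - e^{-2cT}) · h / 4 ) · Σ_{n=1}^{∞} n^{2ρδ} · e^{-c·n^{ρ}·h} ≥ [ (1 - e^{-2cT}) · (1 - e^{-1}) · T^{(1/ρ + 2δ)⁺} · c^{2δ} · h^{1 - (1/ρ + 2δ)⁺} ] / [ 4^{(1 + ρ·δ⁻)} · e^{2^{ρ}·e·c·T} · ( ρ + (1 + 2ρδ)⁻ ) ] > 0. (This is the lower bound for E[‖X‖²] − E[‖Y_i‖²] in Proposition 8.3, expressed deterministically through the explicit variances of the Gaussian coordinates.) -/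

import Mathlib

open Real
set_option maxHeartbeats 1000000

lemma aux_summable (c ρ h α : ℝ) (hc : 0 < c) (hρ : 0 < ρ) (hh : 0 < h) :
    Summable (fun n : ℕ => ((n : ℝ) + 1) ^ α * Real.exp (-c * ((n : ℝ) + 1) ^ ρ * h)) := by
  have hch : 0 < c * h := mul_pos hc hh
  have T0 : Filter.Tendsto (fun z : ℝ => z ^ ((α + 2)/ρ) * Real.exp (-(c*h) * z))
      Filter.atTop (nhds 0) := tendsto_rpow_mul_exp_neg_mul_atTop_nhds_zero _ _ hch
  have Tz : Filter.Tendsto (fun n : ℕ => ((n : ℝ) + 1) ^ ρ) Filter.atTop Filter.atTop :=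
    (tendsto_rpow_atTop hρ).comp (Filter.tendsto_atTop_add_const_right _ 1 tendsto_natCast_atTop_atTop)
  have T1 : Filter.Tendsto (fun n : ℕ => ((n : ℝ) + 1) ^ (α + 2) * Real.exp (-c * ((n : ℝ) + 1) ^ ρ * h))
      Filter.atTop (nhds 0) := by
    refine (T0.comp Tz).congr (fun n => ?_)
    have h1 : (0:ℝ) ≤ (n : ℝ) + 1 := by positivity
    simp only [Function.comp]
    rw [← Real.rpow_mul h1, mul_div_cancel₀ _ (ne_of_gt hρ)]
    ring_nf
  have hev : ∀ᶠ n : ℕ in Filter.atTop, ((n : ℝ) + 1) ^ (α + 2) * Real.exp (-c * ((n : ℝ) + 1) ^ ρ * h) ≤ 1 :=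
    T1.eventually_le_const (show (0:ℝ) < 1 by norm_num)
  have hsum2 : Summable (fun n : ℕ => ((n : ℝ) + 1) ^ (-2 : ℝ)) := by
    have : Summable (fun n : ℕ => ((n : ℝ)) ^ (-2 : ℝ)) := Real.summable_nat_rpow.2 (by norm_num)
    have := (summable_nat_add_iff 1).2 this
    refine this.congr fun n => by push_cast; ring_nf
  refine summable_of_isBigO_nat hsum2 ?_
  rw [Asymptotics.isBigO_iff]
  refine ⟨1, ?_⟩
  filter_upwards [hev] with n hn
  have h1 : (0:ℝ) < (n : ℝ) + 1 := by positivity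
  have key : ((n : ℝ) + 1) ^ α * Real.exp (-c * ((n : ℝ) + 1) ^ ρ * h)
      ≤ ((n : ℝ) + 1) ^ (-2 : ℝ) := by
    have : ((n : ℝ) + 1) ^ α = ((n : ℝ) + 1) ^ (α + 2) * ((n : ℝ) + 1) ^ (-2 : ℝ) := by
      rw [← Real.rpow_add h1]; ring_nf
    rw [this]
    calc ((n : ℝ) + 1) ^ (α + 2) * ((n : ℝ) + 1) ^ (-2 : ℝ) * Real.exp (-c * ((n : ℝ) + 1) ^ ρ * h)
        = (((n : ℝ) + 1) ^ (α + 2) * Real.exp (-c * ((n : ℝ) + 1) ^ ρ * h)) * ((n : ℝ) + 1) ^ (-2 : ℝ) := by ring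
      _ ≤ 1 * ((n : ℝ) + 1) ^ (-2 : ℝ) := by
          apply mul_le_mul_of_nonneg_right hn (by positivity)
      _ = ((n : ℝ) + 1) ^ (-2 : ℝ) := one_mul _
  have hpos : 0 ≤ ((n : ℝ) + 1) ^ α * Real.exp (-c * ((n : ℝ) + 1) ^ ρ * h) := by positivity
  simpa [abs_of_nonneg hpos, abs_of_nonneg (le_of_lt (Real.rpow_pos_of_pos h1 _))] using key


lemma aux_sum_mono {α : ℝ} (hα : 0 ≤ α) (M : ℕ) :
    (M : ℝ) ^ (α + 1) / (α + 1) ≤ ∑ i ∈ Finset.range M, ((i : ℝ) + 1) ^ α := by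
  have hmono : MonotoneOn (fun x : ℝ => x ^ α) (Set.Icc (0:ℝ) (0 + M)) := by
    intro x hx y hy hxy
    exact Real.rpow_le_rpow hx.1 hxy hα
  have := hmono.integral_le_sum
  rw [integral_rpow (Or.inl (by linarith))] at this
  simp only [zero_add] at this
  rw [Real.zero_rpow (by positivity)] at this
  calc (M : ℝ) ^ (α + 1) / (α + 1) = ((M:ℝ) ^ (α+1) - 0)/(α+1) := by ring
    _ ≤ ∑ i ∈ Finset.range M, ((i : ℝ) + 1) ^ α := by
        refine le_trans this (le_of_eq (Finset.sum_congr rfl fun i _ => ?_))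
        push_cast; ring_nf

lemma aux_sum_anti {α : ℝ} (hα : α ≤ 0) (M : ℕ) :
    (∫ x in (1:ℝ)..(1 + M), x ^ α) ≤ ∑ i ∈ Finset.range M, ((i : ℝ) + 1) ^ α := by
  have hanti : AntitoneOn (fun x : ℝ => x ^ α) (Set.Icc (1:ℝ) (1 + M)) := by
    intro x hx y hy hxy
    exact Real.rpow_le_rpow_of_nonpos (lt_of_lt_of_le one_pos hx.1) hxy hα
  have := hanti.integral_le_sum
  refine le_trans this (le_of_eq (Finset.sum_congr rfl fun i _ => ?_))
  ring_nf

lemma aux_chord {x : ℝ} (h0 : 0 ≤ x) (h1 : x ≤ 1) :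
    (1 - Real.exp (-1)) * x ≤ 1 - Real.exp (-x) := by
  have := convexOn_exp.2 (Set.mem_univ (0:ℝ)) (Set.mem_univ (-1:ℝ))
    (by linarith : (0:ℝ) ≤ 1 - x) h0 (by ring)
  simp only [smul_eq_mul, mul_zero, mul_neg_one, zero_add, Real.exp_zero] at this
  nlinarith [this]

lemma aux_exp_sub_one {z : ℝ} (hz : 1 ≤ z) :
    (1 - Real.exp (-1)) * Real.exp z ≤ Real.exp z - 1 := by
  have h1 : (1:ℝ) ≤ Real.exp (z - 1) := Real.one_le_exp (by linarith)
  have h2 : Real.exp (-1) * Real.exp z = Real.exp (z - 1) := by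
    rw [← Real.exp_add]; ring_nf
  nlinarith

lemma aux_exp_frac {t : ℝ} (ht : 0 ≤ t) : Real.exp (t / (1 + t)) ≤ 1 + t := by
  have h1 : (0:ℝ) < 1 + t := by linarith
  have hy : t / (1+t) < 1 := by rw [div_lt_one h1]; linarith
  have := Real.add_one_le_exp (-(t/(1+t)))
  have h2 : Real.exp (-(t/(1+t))) * Real.exp (t/(1+t)) = 1 := by
    rw [← Real.exp_add]; simp
  have h3 : (0:ℝ) < Real.exp (t/(1+t)) := Real.exp_pos _
  have h4 : (1 - t/(1+t)) * Real.exp (t/(1+t)) ≤ 1 := by nlinarith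
  have h5 : 1 - t/(1+t) = 1/(1+t) := by field_simp; ring
  rw [h5] at h4
  calc Real.exp (t/(1+t)) = (1+t) * (1/(1+t) * Real.exp (t/(1+t))) := by field_simp
    _ ≤ (1+t) * 1 := by
        apply mul_le_mul_of_nonneg_left _ h1.le
        simpa [mul_comm] using h4
    _ = 1 + t := mul_one _

lemma aux_key (ρ δ : ℝ) (hρ : 0 < ρ) (N : ℕ) (hN : 1 ≤ N) :
    (1 - Real.exp (-1)) * (N : ℝ) ^ (max (1/ρ + 2*δ) 0) ≤
      (ρ + max (-(1 + 2*ρ*δ)) 0) * (4:ℝ) ^ (ρ * max (-δ) 0) *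
      ∑ i ∈ Finset.range (⌊2 * (Real.exp 1 * N) ^ (1/ρ)⌋₊), ((i:ℝ)+1) ^ (2*ρ*δ) := by
  obtain ⟨x, hxdef⟩ : ∃ x : ℝ, x = (Real.exp 1 * N) ^ (1/ρ) := ⟨_, rfl⟩
  obtain ⟨M, hMdef⟩ : ∃ M : ℕ, M = ⌊2 * x⌋₊ := ⟨_, rfl⟩
  rw [show ⌊2 * (Real.exp 1 * (N:ℝ)) ^ (1/ρ)⌋₊ = M from by rw [hMdef, hxdef]]
  obtain ⟨L, hLdef⟩ : ∃ L : ℝ, L = Real.log (1 + M) := ⟨_, rfl⟩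
  have hN1 : (1:ℝ) ≤ N := by exact_mod_cast hN
  have hNpos : (0:ℝ) < N := by linarith
  have he1 : (1:ℝ) ≤ Real.exp 1 := Real.one_le_exp (by norm_num)
  have heN : (1:ℝ) ≤ Real.exp 1 * N := by nlinarith
  have heN0 : (0:ℝ) ≤ Real.exp 1 * N := by linarith
  have hx1 : 1 ≤ x := hxdef ▸ Real.one_le_rpow heN (by positivity)
  have hx0 : (0:ℝ) < x := lt_of_lt_of_le one_pos hx1
  have hMle : (M:ℝ) ≤ 2*x := by rw [hMdef]; exact Nat.floor_le (by positivity)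
  have hxM : x ≤ (M:ℝ) := by
    have := Nat.sub_one_lt_floor (2*x)
    rw [← hMdef] at this
    linarith
  have hM1R : (1:ℝ) ≤ (M:ℝ) := le_trans hx1 hxM
  have h2xM : 2*x ≤ 1 + (M:ℝ) := by
    have := Nat.lt_floor_add_one (2*x)
    rw [← hMdef] at this
    linarith
  have h1M : (0:ℝ) < 1 + (M:ℝ) := by linarith
  have hlogx : Real.log x = (1 + Real.log N)/ρ := by
    rw [hxdef]
    rw [ Real.log_rpow (by linarith : (0:ℝ) < Real.exp 1 * N),
      Real.log_mul (Real.exp_ne_zero 1) (ne_of_gt hNpos), Real.log_exp]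
    ring
  have hρL : 1 + Real.log N ≤ ρ * L := by
    have h2 : Real.log (2*x) ≤ L := by rw [hLdef]; exact Real.log_le_log (by linarith) h2xM
    have h3 : Real.log (2*x) = Real.log 2 + Real.log x :=
      Real.log_mul (by norm_num) (by linarith)
    have h4 : (0:ℝ) < Real.log 2 := Real.log_pos (by norm_num)
    have h5 : ρ * Real.log x = 1 + Real.log N := by
      rw [hlogx]; field_simp
    nlinarith
  have hlogN : (0:ℝ) ≤ Real.log N := Real.log_nonneg hN1
  have hL1 : 1 ≤ ρ * L := by linarith
  have hLpos : 0 < L := by nlinarith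
  obtain ⟨SS, hSSdef⟩ : ∃ S : ℝ, S = ∑ i ∈ Finset.range M, ((i:ℝ)+1) ^ (2*ρ*δ) := ⟨_, rfl⟩
  rw [← hSSdef]
  have hSSnn : 0 ≤ SS := hSSdef ▸ Finset.sum_nonneg fun i _ => by positivity
  have h4ge1 : (1:ℝ) ≤ (4:ℝ) ^ (ρ * max (-δ) 0) :=
    Real.one_le_rpow (by norm_num) (by positivity)
  have hxpow : ∀ r : ℝ, x ^ r = Real.exp ((1/ρ) * r) * (N:ℝ) ^ ((1/ρ) * r) := by
    intro r
    rw [hxdef]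
    rw [ ← Real.rpow_mul heN0, Real.mul_rpow (by positivity) (by positivity),
      Real.exp_one_rpow]
  rcases le_or_gt 0 δ with hδ | hδ
  · -- Case A : δ ≥ 0
    have hq : max (-(1 + 2*ρ*δ)) 0 = 0 := max_eq_right (by nlinarith)
    have hm : max (-δ) 0 = 0 := max_eq_right (by linarith)
    have hp : max (1/ρ + 2*δ) 0 = 1/ρ + 2*δ := max_eq_left (by positivity)
    rw [hq, hm, hp, mul_zero, Real.rpow_zero, mul_one, add_zero]
    obtain ⟨p, hpdef⟩ : ∃ p : ℝ, p = 1/ρ + 2*δ := ⟨_, rfl⟩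
    rw [← hpdef]
    have hppos : 0 < p := by rw [hpdef]; positivity
    have hBpos : (0:ℝ) < 2*ρ*δ + 1 := by nlinarith
    have hsum : (M:ℝ) ^ (2*ρ*δ + 1) / (2*ρ*δ + 1) ≤ SS :=
      hSSdef ▸ aux_sum_mono (show (0:ℝ) ≤ 2*ρ*δ by positivity) M
    have hMx : x ^ (2*ρ*δ + 1) ≤ (M:ℝ) ^ (2*ρ*δ + 1) :=
      Real.rpow_le_rpow (by positivity) hxM (by positivity)
    have hfrac : (1/ρ) * (2*ρ*δ + 1) = p := by
      rw [hpdef]; field_simp; ring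
    have hxval : x ^ (2*ρ*δ + 1) = Real.exp p * (N:ℝ) ^ p := by
      rw [hxpow (2*ρ*δ + 1), hfrac]
    have hρp : ρ * p = 2*ρ*δ + 1 := by
      rw [hpdef]; field_simp; ring
    have hNp : (0:ℝ) < (N:ℝ) ^ p := by positivity
    have hep : p ≤ Real.exp p := by linarith [Real.add_one_le_exp p]
    have hchain : Real.exp p * (N:ℝ) ^ p / (2*ρ*δ+1) ≤ SS := by
      refine le_trans ?_ hsum
      rw [← hxval]
      exact div_le_div_of_nonneg_right hMx hBpos.le
    have key2 : (N:ℝ)^p ≤ ρ * (Real.exp p * (N:ℝ)^p/(2*ρ*δ+1)) := by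
      have heq : ρ * (Real.exp p * (N:ℝ)^p/(2*ρ*δ+1)) = Real.exp p * (N:ℝ)^p / p := by
        rw [← hρp]; field_simp
      rw [heq, le_div_iff₀ hppos]; nlinarith
    have hfin : ρ * (Real.exp p * (N:ℝ)^p/(2*ρ*δ+1)) ≤ ρ * SS :=
      mul_le_mul_of_nonneg_left hchain hρ.le
    nlinarith [Real.exp_pos (-1:ℝ)]
  · -- δ < 0
    have hm : max (-δ) 0 = -δ := max_eq_left (by linarith)
    rw [hm]
    have h24 : (4:ℝ) = (2:ℝ)^(2:ℝ) := by
      rw [show (2:ℝ)^(2:ℝ) = (2:ℝ)^(2:ℕ) from by rw [← Real.rpow_natCast]; norm_num]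
      norm_num
    have h4eq : (4:ℝ)^(ρ * -δ) = (2:ℝ)^(-(2*ρ*δ)) := by
      rw [h24, ← Real.rpow_mul (by norm_num : (0:ℝ) ≤ 2)]
      ring_nf
    rw [h4eq]
    have hαneg : 2*ρ*δ < 0 := by
      have h2ρ : 0 < 2*ρ := by linarith
      calc 2*ρ*δ = (2*ρ)*δ := by ring
        _ < 0 := mul_neg_of_pos_of_neg h2ρ hδ
    have h2a : (1:ℝ) ≤ (2:ℝ)^(-(2*ρ*δ)) := Real.one_le_rpow (by norm_num) (by linarith)
    have hint : (∫ y in (1:ℝ)..(1 + M), y ^ (2*ρ*δ)) ≤ SS :=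
      hSSdef ▸ aux_sum_anti hαneg.le M
    have hem1 : Real.exp (-1:ℝ) < 1 := Real.exp_lt_one_iff.2 (by norm_num)
    rcases lt_or_ge 0 (1 + 2*ρ*δ) with hβ | hβ0
    · -- -1 < 2ρδ < 0
      have hβpos : 0 < 2*ρ*δ + 1 := by linarith
      have hq : max (-(1 + 2*ρ*δ)) 0 = 0 := max_eq_right (by linarith)
      have hppos' : 0 < 1/ρ + 2*δ := by
        have hh1 : 1/ρ + 2*δ = (1 + 2*ρ*δ)/ρ := by field_simp
        rw [hh1]; exact div_pos hβ hρ
      have hp : max (1/ρ + 2*δ) 0 = 1/ρ + 2*δ := max_eq_left hppos'.le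
      rw [hq, hp, add_zero]
      obtain ⟨p, hpdef⟩ : ∃ p : ℝ, p = 1/ρ + 2*δ := ⟨_, rfl⟩
      rw [← hpdef]
      have hppos : 0 < p := hpdef ▸ hppos'
      rw [integral_rpow (Or.inl (by linarith : (-1:ℝ) < 2*ρ*δ)), Real.one_rpow] at hint
      have hexp : (1+(M:ℝ))^(2*ρ*δ+1) = Real.exp ((2*ρ*δ+1) * L) := by
        rw [Real.rpow_def_of_pos h1M, hLdef, mul_comm]
      have hfrac : (1/ρ) * (2*ρ*δ + 1) = p := by
        rw [hpdef]; field_simp; ring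
      have hρp : ρ * p = 2*ρ*δ + 1 := by
        rw [hpdef]; field_simp; ring
      have hNp : (0:ℝ) < (N:ℝ) ^ p := by positivity
      have hep : p ≤ Real.exp p := by linarith [Real.add_one_le_exp p]
      rcases le_or_gt 1 ((2*ρ*δ+1) * L) with h1 | h1
      · -- βL ≥ 1
        have hest := aux_exp_sub_one h1
        have hc2 : (2*x)^(2*ρ*δ+1) ≤ (1+(M:ℝ))^(2*ρ*δ+1) :=
          Real.rpow_le_rpow (by positivity) h2xM hβpos.le
        have hc3 : (2*x)^(2*ρ*δ+1) = (2:ℝ)^(2*ρ*δ+1) * (Real.exp p * (N:ℝ)^p) := by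
          rw [Real.mul_rpow (by norm_num) (by positivity), hxpow (2*ρ*δ+1), hfrac]
        have hW : (1 - Real.exp (-1)) * ((2:ℝ)^(2*ρ*δ+1) * (Real.exp p * (N:ℝ)^p)) / (2*ρ*δ+1) ≤ SS := by
          refine le_trans ?_ hint
          apply div_le_div_of_nonneg_right _ hβpos.le
          calc (1 - Real.exp (-1)) * ((2:ℝ)^(2*ρ*δ+1) * (Real.exp p * (N:ℝ)^p))
              = (1 - Real.exp (-1)) * (2*x)^(2*ρ*δ+1) := by rw [hc3]
            _ ≤ (1 - Real.exp (-1)) * (1+(M:ℝ))^(2*ρ*δ+1) := by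
                apply mul_le_mul_of_nonneg_left hc2 (by linarith)
            _ = (1 - Real.exp (-1)) * Real.exp ((2*ρ*δ+1) * L) := by rw [hexp]
            _ ≤ Real.exp ((2*ρ*δ+1) * L) - 1 := hest
            _ = (1+(M:ℝ))^(2*ρ*δ+1) - 1 := by rw [hexp]
        have h2pow : (2:ℝ)^(-(2*ρ*δ)) * (2:ℝ)^(2*ρ*δ+1) = 2 := by
          rw [← Real.rpow_add (by norm_num : (0:ℝ) < 2)]
          norm_num
        have hfac : (1:ℝ) ≤ ρ * (2:ℝ)^(-(2*ρ*δ)) * ((2:ℝ)^(2*ρ*δ+1) * Real.exp p) / (2*ρ*δ+1) := by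
          rw [le_div_iff₀ hβpos]
          have heq2 : ρ * (2:ℝ)^(-(2*ρ*δ)) * ((2:ℝ)^(2*ρ*δ+1) * Real.exp p)
              = 2 * (ρ * Real.exp p) := by
            rw [show ρ * (2:ℝ)^(-(2*ρ*δ)) * ((2:ℝ)^(2*ρ*δ+1) * Real.exp p)
                = ((2:ℝ)^(-(2*ρ*δ)) * (2:ℝ)^(2*ρ*δ+1)) * (ρ * Real.exp p) from by ring, h2pow]
          rw [heq2]
          have h5 := mul_le_mul_of_nonneg_left hep hρ.le
          rw [hρp] at h5
          linarith
        calc (1 - Real.exp (-1)) * (N:ℝ)^p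
            = ((1 - Real.exp (-1)) * (N:ℝ)^p) * 1 := by ring
          _ ≤ ((1 - Real.exp (-1)) * (N:ℝ)^p) *
              (ρ * (2:ℝ)^(-(2*ρ*δ)) * ((2:ℝ)^(2*ρ*δ+1) * Real.exp p) / (2*ρ*δ+1)) := by
              exact mul_le_mul_of_nonneg_left hfac (mul_nonneg (by linarith) hNp.le)
          _ = (ρ * (2:ℝ)^(-(2*ρ*δ))) *
              ((1 - Real.exp (-1)) * ((2:ℝ)^(2*ρ*δ+1) * (Real.exp p * (N:ℝ)^p)) / (2*ρ*δ+1)) := by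
              ring
          _ ≤ (ρ * (2:ℝ)^(-(2*ρ*δ))) * SS := by
              apply mul_le_mul_of_nonneg_left hW (by positivity)
          _ = ρ * (2:ℝ)^(-(2*ρ*δ)) * SS := by ring
      · -- βL < 1
        have hLSS : L ≤ SS := by
          refine le_trans ?_ hint
          rw [hexp, le_div_iff₀ hβpos]
          have h5 := Real.add_one_le_exp ((2*ρ*δ+1) * L)
          nlinarith [h5]
        have hNpL : (N:ℝ)^p ≤ ρ * L := by
          rw [Real.rpow_def_of_pos hNpos]
          have hpl1 : Real.log N * p ≤ Real.log N / (ρ * L) := by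
            have hpinv : p ≤ 1/(ρ*L) := by
              rw [le_div_iff₀ (by nlinarith : (0:ℝ) < ρ*L)]
              have h6 : p*(ρ*L) = (2*ρ*δ+1)*L := by rw [← hρp]; ring
              linarith [h6.le, h6.ge, h1]
            calc Real.log N * p ≤ Real.log N * (1/(ρ*L)) :=
                mul_le_mul_of_nonneg_left hpinv hlogN
              _ = Real.log N / (ρ*L) := by ring
          have hpl2 : Real.log N / (ρ * L) ≤ Real.log N / (1 + Real.log N) :=
            div_le_div_of_nonneg_left hlogN (by linarith) hρL
          calc Real.exp (Real.log N * p) ≤ Real.exp (Real.log N / (1 + Real.log N)) :=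
              Real.exp_le_exp.2 (le_trans hpl1 hpl2)
            _ ≤ 1 + Real.log N := aux_exp_frac hlogN
            _ ≤ ρ * L := hρL
        calc (1 - Real.exp (-1)) * (N:ℝ)^p
            ≤ 1 * (N:ℝ)^p := by
              apply mul_le_mul_of_nonneg_right _ hNp.le
              linarith [Real.exp_pos (-1:ℝ)]
          _ = (N:ℝ)^p := one_mul _
          _ ≤ ρ * L := hNpL
          _ ≤ ρ * SS := mul_le_mul_of_nonneg_left hLSS hρ.le
          _ = (ρ * SS) * 1 := by ring
          _ ≤ (ρ * SS) * (2:ℝ)^(-(2*ρ*δ)) := by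
              apply mul_le_mul_of_nonneg_left h2a (mul_nonneg hρ.le hSSnn)
          _ = ρ * (2:ℝ)^(-(2*ρ*δ)) * SS := by ring
    · -- 2ρδ ≤ -1
      have hp : max (1/ρ + 2*δ) 0 = 0 := by
        apply max_eq_right
        have hh1 : 1/ρ + 2*δ = (1 + 2*ρ*δ)/ρ := by field_simp
        rw [hh1]
        exact div_nonpos_of_nonpos_of_nonneg hβ0 hρ.le
      rw [hp, Real.rpow_zero, mul_one]
      rcases eq_or_lt_of_le hβ0 with heq | hlt
      · -- 2ρδ = -1
        have hαval : 2*ρ*δ = (-1:ℝ) := by linarith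
        have hq : max (-(1 + 2*ρ*δ)) 0 = 0 := by
          rw [heq]; simp
        rw [hq, add_zero]
        have hLSS : L ≤ SS := by
          refine le_trans ?_ hint
          rw [hαval]
          have hres : (∫ y in (1:ℝ)..(1 + M), y ^ (-1:ℝ)) = ∫ y in (1:ℝ)..(1 + M), y⁻¹ := by
            apply intervalIntegral.integral_congr
            intro y _
            exact Real.rpow_neg_one y
          rw [hres, integral_inv (by
            rw [Set.uIcc_of_le (by linarith : (1:ℝ) ≤ 1 + M)]
            intro hmem
            exact absurd hmem.1 (by norm_num)), div_one, hLdef]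
        calc (1:ℝ) - Real.exp (-1) ≤ 1 := by linarith [Real.exp_pos (-1:ℝ)]
          _ ≤ ρ * L := hL1
          _ ≤ ρ * SS := mul_le_mul_of_nonneg_left hLSS hρ.le
          _ = (ρ * SS) * 1 := by ring
          _ ≤ (ρ * SS) * (2:ℝ)^(-(2*ρ*δ)) := by
              exact mul_le_mul_of_nonneg_left h2a (mul_nonneg hρ.le hSSnn)
          _ = ρ * (2:ℝ)^(-(2*ρ*δ)) * SS := by ring
      · -- 2ρδ < -1
        have hq : max (-(1 + 2*ρ*δ)) 0 = -(1 + 2*ρ*δ) := max_eq_left (by linarith)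
        rw [hq]
        obtain ⟨q, hqdef⟩ : ∃ q : ℝ, q = -(1 + 2*ρ*δ) := ⟨_, rfl⟩
        rw [← hqdef]
        have hqpos : 0 < q := by rw [hqdef]; linarith
        rw [integral_rpow (Or.inr ⟨by linarith, by
          rw [Set.uIcc_of_le (by linarith : (1:ℝ) ≤ 1 + M)]
          intro hmem
          exact absurd hmem.1 (by norm_num)⟩), Real.one_rpow] at hint
        have hexp : (1+(M:ℝ))^(2*ρ*δ+1) = Real.exp (-(q*L)) := by
          rw [Real.rpow_def_of_pos h1M, hLdef]
          congr 1
          rw [hqdef]; ring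
        have hIq : (1 - Real.exp (-(q*L)))/q ≤ SS := by
          have heq2 : ((1+(M:ℝ))^(2*ρ*δ+1) - 1)/(2*ρ*δ+1) = (1 - Real.exp (-(q*L)))/q := by
            rw [hexp, show (2*ρ*δ+1) = -q from by rw [hqdef]; ring, div_neg, ← neg_div]
            congr 1
            ring
          rw [← heq2]; exact hint
        have hqL0 : 0 ≤ q * L := by positivity
        rcases le_or_gt 1 (q * L) with h1 | h1
        · -- qL ≥ 1
          have hmono : Real.exp (-(q*L)) ≤ Real.exp (-1) :=
            Real.exp_le_exp.2 (by linarith)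
          have hstep : (1 - Real.exp (-1))/q ≤ SS := by
            refine le_trans ?_ hIq
            exact div_le_div_of_nonneg_right (by linarith) hqpos.le
          have h7 : (1 - Real.exp (-1)) ≤ q * SS := by
            have h8 := mul_le_mul_of_nonneg_left hstep hqpos.le
            have h9 : q * ((1 - Real.exp (-1))/q) = 1 - Real.exp (-1) := by
              field_simp
            linarith
          have h10 : 0 ≤ ρ * SS := mul_nonneg hρ.le hSSnn
          calc (1:ℝ) - Real.exp (-1)
              ≤ q * SS := h7
            _ ≤ (ρ + q) * SS := by nlinarith
            _ = (ρ + q) * 1 * SS := by ring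
            _ ≤ (ρ + q) * (2:ℝ)^(-(2*ρ*δ)) * SS := by
                apply mul_le_mul_of_nonneg_right _ hSSnn
                apply mul_le_mul_of_nonneg_left h2a (by linarith)
        · -- qL < 1
          have hchord := aux_chord hqL0 h1.le
          have hstep : (1 - Real.exp (-1)) * L ≤ SS := by
            refine le_trans ?_ hIq
            rw [le_div_iff₀ hqpos]
            calc (1 - Real.exp (-1)) * L * q = (1 - Real.exp (-1)) * (q*L) := by ring
              _ ≤ 1 - Real.exp (-(q*L)) := hchord
          calc (1:ℝ) - Real.exp (-1)
              = (1 - Real.exp (-1)) * 1 := by ring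
            _ ≤ (1 - Real.exp (-1)) * (ρ * L) := by
                apply mul_le_mul_of_nonneg_left hL1 (by linarith [Real.exp_pos (-1:ℝ)])
            _ = ρ * ((1 - Real.exp (-1)) * L) := by ring
            _ ≤ ρ * SS := mul_le_mul_of_nonneg_left hstep hρ.le
            _ ≤ (ρ + q) * SS := by
                apply mul_le_mul_of_nonneg_right _ hSSnn
                linarith
            _ = (ρ + q) * 1 * SS := by ring
            _ ≤ (ρ + q) * (2:ℝ)^(-(2*ρ*δ)) * SS := by
                apply mul_le_mul_of_nonneg_right _ hSSnn
                apply mul_le_mul_of_nonneg_left h2a (by linarith)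



/-- For `c, ρ, h ∈ (0,∞)`, `δ ∈ ℝ`, `N ≥ 1`, `T = N·h`, the series
`Σ_{n=1}^∞ n^{2ρδ} e^{-c n^ρ h}` converges and
`(c^{2δ}(1-e^{-2cT})h/4) Σ_{n=1}^∞ n^{2ρδ} e^{-c n^ρ h}
  ≥ (1-e^{-2cT})(1-e^{-1}) T^{(1/ρ+2δ)⁺} c^{2δ} h^{1-(1/ρ+2δ)⁺}
      / (4^{1+ρδ⁻} e^{2^ρ e c T} (ρ+(1+2ρδ)⁻)) > 0`. -/
theorem stmt_4 (c ρ h : ℝ) (hc : 0 < c) (hρ : 0 < ρ) (hh : 0 < h)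
    (δ : ℝ) (N : ℕ) (hN : 1 ≤ N) (T : ℝ) (hT : T = N * h) :
    Summable (fun n : ℕ =>
      ((n : ℝ) + 1) ^ (2 * ρ * δ) * Real.exp (-c * ((n : ℝ) + 1) ^ ρ * h)) ∧
    (c ^ (2 * δ) * (1 - Real.exp (-2 * c * T)) * h / 4)
        * ∑' n : ℕ, ((n : ℝ) + 1) ^ (2 * ρ * δ) * Real.exp (-c * ((n : ℝ) + 1) ^ ρ * h)
      ≥ ((1 - Real.exp (-2 * c * T)) * (1 - Real.exp (-1))
            * T ^ (max (1 / ρ + 2 * δ) 0) * c ^ (2 * δ)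
            * h ^ (1 - max (1 / ρ + 2 * δ) 0))
          / ((4 : ℝ) ^ (1 + ρ * max (-δ) 0)
            * Real.exp ((2 : ℝ) ^ ρ * Real.exp 1 * c * T)
            * (ρ + max (-(1 + 2 * ρ * δ)) 0)) ∧
    ((1 - Real.exp (-2 * c * T)) * (1 - Real.exp (-1))
            * T ^ (max (1 / ρ + 2 * δ) 0) * c ^ (2 * δ)
            * h ^ (1 - max (1 / ρ + 2 * δ) 0))
          / ((4 : ℝ) ^ (1 + ρ * max (-δ) 0)
            * Real.exp ((2 : ℝ) ^ ρ * Real.exp 1 * c * T)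
            * (ρ + max (-(1 + 2 * ρ * δ)) 0)) > 0 := by
  have hN1 : (1:ℝ) ≤ N := by exact_mod_cast hN
  have hNpos : (0:ℝ) < N := by linarith
  have hTpos : 0 < T := by rw [hT]; exact mul_pos hNpos hh
  have hsum : Summable (fun n : ℕ =>
      ((n : ℝ) + 1) ^ (2 * ρ * δ) * Real.exp (-c * ((n : ℝ) + 1) ^ ρ * h)) :=
    aux_summable c ρ h (2*ρ*δ) hc hρ hh
  have hA : 0 < 1 - Real.exp (-2 * c * T) := by
    have : Real.exp (-2 * c * T) < 1 := Real.exp_lt_one_iff.2 (by nlinarith)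
    linarith
  have hB : 0 < 1 - Real.exp (-1:ℝ) := by
    have : Real.exp (-1:ℝ) < 1 := Real.exp_lt_one_iff.2 (by norm_num)
    linarith
  have hQ : 0 < ρ + max (-(1 + 2 * ρ * δ)) 0 := by
    have := le_max_right (-(1 + 2 * ρ * δ)) (0:ℝ)
    linarith
  have hG : (0:ℝ) < (4 : ℝ) ^ (ρ * max (-δ) 0) := Real.rpow_pos_of_pos (by norm_num) _
  have hden : (0:ℝ) < (4 : ℝ) ^ (1 + ρ * max (-δ) 0)
      * Real.exp ((2 : ℝ) ^ ρ * Real.exp 1 * c * T) * (ρ + max (-(1 + 2 * ρ * δ)) 0) :=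
    mul_pos (mul_pos (Real.rpow_pos_of_pos (by norm_num) _) (Real.exp_pos _)) hQ
  have hnum : (0:ℝ) < (1 - Real.exp (-2 * c * T)) * (1 - Real.exp (-1))
      * T ^ (max (1 / ρ + 2 * δ) 0) * c ^ (2 * δ) * h ^ (1 - max (1 / ρ + 2 * δ) 0) := by
    have h1 : (0:ℝ) < T ^ (max (1 / ρ + 2 * δ) 0) := Real.rpow_pos_of_pos hTpos _
    have h2 : (0:ℝ) < c ^ (2 * δ) := Real.rpow_pos_of_pos hc _
    have h3 : (0:ℝ) < h ^ (1 - max (1 / ρ + 2 * δ) 0) := Real.rpow_pos_of_pos hh _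
    positivity
  refine ⟨hsum, ?_, div_pos hnum hden⟩
  -- now the main inequality
  rw [ge_iff_le, div_le_iff₀ hden]
  obtain ⟨x, hxdef⟩ : ∃ x : ℝ, x = (Real.exp 1 * N) ^ (1/ρ) := ⟨_, rfl⟩
  obtain ⟨M, hMdef⟩ : ∃ M : ℕ, M = ⌊2 * x⌋₊ := ⟨_, rfl⟩
  have hkey := aux_key ρ δ hρ N hN
  rw [show ⌊2 * (Real.exp 1 * (N:ℝ)) ^ (1/ρ)⌋₊ = M from by rw [hMdef, hxdef]] at hkey
  have he1 : (1:ℝ) ≤ Real.exp 1 := Real.one_le_exp (by norm_num)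
  have heN : (1:ℝ) ≤ Real.exp 1 * N := by nlinarith
  have hx1 : 1 ≤ x := hxdef ▸ Real.one_le_rpow heN (by positivity)
  have hMle : (M:ℝ) ≤ 2*x := by rw [hMdef]; exact Nat.floor_le (by positivity)
  have hxρ : x ^ ρ = Real.exp 1 * N := by
    rw [hxdef, ← Real.rpow_mul (by linarith), one_div_mul_cancel hρ.ne', Real.rpow_one]
  obtain ⟨E, hEdef⟩ : ∃ E : ℝ, E = (2:ℝ) ^ ρ * Real.exp 1 * c * T := ⟨_, rfl⟩
  rw [← hEdef]
  have hterm : ∀ i : ℕ, i ∈ Finset.range M →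
      Real.exp (-E) * ((i:ℝ)+1) ^ (2*ρ*δ) ≤
        ((i : ℝ) + 1) ^ (2 * ρ * δ) * Real.exp (-c * ((i : ℝ) + 1) ^ ρ * h) := by
    intro i hi
    rw [Finset.mem_range] at hi
    have hi1 : (i:ℝ) + 1 ≤ M := by exact_mod_cast Nat.succ_le_of_lt hi
    have hp1 : ((i:ℝ)+1) ^ ρ ≤ (2*x) ^ ρ :=
      Real.rpow_le_rpow (by positivity) (by linarith) hρ.le
    have hp2 : (2*x) ^ ρ = (2:ℝ)^ρ * (Real.exp 1 * N) := by
      rw [Real.mul_rpow (by norm_num) (by linarith), hxρ]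
    have hp3 : c * ((i:ℝ)+1) ^ ρ * h ≤ E := by
      rw [hEdef, hT]
      calc c * ((i:ℝ)+1) ^ ρ * h ≤ c * ((2:ℝ)^ρ * (Real.exp 1 * N)) * h := by
            rw [← hp2]
            apply mul_le_mul_of_nonneg_right (mul_le_mul_of_nonneg_left hp1 hc.le) hh.le
        _ = (2:ℝ)^ρ * Real.exp 1 * c * ((N:ℝ) * h) := by ring
    have hp4 : Real.exp (-c * ((i:ℝ)+1) ^ ρ * h) ≥ Real.exp (-E) := by
      apply Real.exp_le_exp.2
      rw [neg_mul, neg_mul]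
      linarith
    calc Real.exp (-E) * ((i:ℝ)+1) ^ (2*ρ*δ)
        ≤ Real.exp (-c * ((i:ℝ)+1) ^ ρ * h) * ((i:ℝ)+1) ^ (2*ρ*δ) :=
          mul_le_mul_of_nonneg_right hp4 (by positivity)
      _ = ((i : ℝ) + 1) ^ (2 * ρ * δ) * Real.exp (-c * ((i : ℝ) + 1) ^ ρ * h) := by ring
  obtain ⟨S, hSdef⟩ : ∃ S : ℝ, S = ∑' n : ℕ, ((n : ℝ) + 1) ^ (2 * ρ * δ)
      * Real.exp (-c * ((n : ℝ) + 1) ^ ρ * h) := ⟨_, rfl⟩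
  rw [← hSdef]
  obtain ⟨SS, hSSdef⟩ : ∃ SS : ℝ, SS = ∑ i ∈ Finset.range M, ((i:ℝ)+1) ^ (2*ρ*δ) := ⟨_, rfl⟩
  rw [← hSSdef] at hkey
  have hSSnn : 0 ≤ SS := hSSdef ▸ Finset.sum_nonneg fun i _ => by positivity
  have hS_lb : Real.exp (-E) * SS ≤ S := by
    rw [hSSdef, hSdef, Finset.mul_sum]
    refine le_trans (Finset.sum_le_sum hterm) ?_
    exact Summable.sum_le_tsum _ (fun i _ => by positivity) hsum
  -- SS ≤ S * exp E
  have hSE : SS ≤ S * Real.exp E := by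
    have h1 : Real.exp (-E) * Real.exp E = 1 := by rw [← Real.exp_add]; simp
    have h2 := mul_le_mul_of_nonneg_right hS_lb (Real.exp_pos E).le
    calc SS = Real.exp (-E) * SS * Real.exp E := by
          rw [show Real.exp (-E) * SS * Real.exp E = (Real.exp (-E) * Real.exp E) * SS from by ring,
            h1, one_mul]
      _ ≤ S * Real.exp E := h2
  have hSnn : 0 ≤ S := le_trans (by positivity) hS_lb
  -- core : (1-e⁻¹) N^p ≤ S * G * expE * Q
  obtain ⟨p, hpdef⟩ : ∃ p : ℝ, p = max (1 / ρ + 2 * δ) 0 := ⟨_, rfl⟩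
  rw [← hpdef] at hkey ⊢
  obtain ⟨Q, hQdef⟩ : ∃ Q : ℝ, Q = ρ + max (-(1 + 2 * ρ * δ)) 0 := ⟨_, rfl⟩
  rw [← hQdef] at hkey ⊢
  rw [← hQdef] at hQ
  obtain ⟨G, hGdef⟩ : ∃ G : ℝ, G = (4:ℝ) ^ (ρ * max (-δ) 0) := ⟨_, rfl⟩
  rw [← hGdef] at hkey hG
  have hcore : (1 - Real.exp (-1)) * (N:ℝ)^p ≤ S * Real.exp E * G * Q := by
    calc (1 - Real.exp (-1)) * (N:ℝ)^p ≤ Q * G * SS := hkey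
      _ ≤ Q * G * (S * Real.exp E) :=
          mul_le_mul_of_nonneg_left hSE (mul_nonneg hQ.le hG.le)
      _ = S * Real.exp E * G * Q := by ring
  -- rewrite numerator
  have hTp1 : T ^ p = (N:ℝ)^p * h^p := by
    rw [hT, Real.mul_rpow (by positivity) hh.le]
  have hhp : h^p * h^(1-p) = h := by
    rw [← Real.rpow_add hh, show p + (1-p) = 1 by ring, Real.rpow_one]
  have h4split : (4:ℝ) ^ (1 + ρ * max (-δ) 0) = 4 * G := by
    rw [hGdef, Real.rpow_add (by norm_num : (0:ℝ) < 4), Real.rpow_one]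
  rw [h4split]
  have hnum_eq : (1 - Real.exp (-2 * c * T)) * (1 - Real.exp (-1)) * T ^ p * c ^ (2 * δ)
      * h ^ (1 - p)
      = (1 - Real.exp (-2 * c * T)) * c ^ (2 * δ) * h * ((1 - Real.exp (-1)) * (N:ℝ)^p) := by
    rw [hTp1, show (1 - Real.exp (-2 * c * T)) * (1 - Real.exp (-1)) * ((N:ℝ)^p * h^p)
      * c ^ (2 * δ) * h ^ (1 - p)
      = (1 - Real.exp (-2 * c * T)) * c ^ (2 * δ) * (h^p * h^(1-p))
        * ((1 - Real.exp (-1)) * (N:ℝ)^p) from by ring, hhp]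
  rw [hnum_eq]
  have hC : (0:ℝ) < c ^ (2*δ) := Real.rpow_pos_of_pos hc _
  calc (1 - Real.exp (-2 * c * T)) * c ^ (2 * δ) * h * ((1 - Real.exp (-1)) * (N:ℝ)^p)
      ≤ (1 - Real.exp (-2 * c * T)) * c ^ (2 * δ) * h * (S * Real.exp E * G * Q) := by
        apply mul_le_mul_of_nonneg_left hcore
        positivity
    _ = c ^ (2 * δ) * (1 - Real.exp (-2 * c * T)) * h / 4 * S * (4 * G * Real.exp E * Q) := by
        ring
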